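/- Let f₂ : [−2, 12]² → ℝ be defined by f₂(x, y) = −10·exp(−√(|x + y|/2)) − exp(0.5·(cos(2πx) + cos(2πy))). Then for every η > 0 and all p, q ∈ [−2, 12]², |f₂(p) − f₂(q)| ≤ (25/(2η) + π·e)·‖p − q‖₁ + η, where ‖(u, v)‖₁ = |u| + |v| is the ℓ¹ norm on ℝ² and e is Euler's number. -/

import Mathlib

open Real

lemma exp_diff_le' {M u v : ℝ} (hu : u ≤ M) (hv : v ≤ M) :
    |Real.exp u - Real.exp v| ≤ Real.exp M * |u - v| := by
  wlog h : v ≤ u generalizing u v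
  · rw [abs_sub_comm, abs_sub_comm u v]; exact this hv hu (le_of_not_ge h)
  have h1 : Real.exp u * (v - u + 1) ≤ Real.exp v := by
    have := Real.add_one_le_exp (v - u)
    have h2 := Real.exp_pos u
    calc Real.exp u * (v - u + 1) ≤ Real.exp u * Real.exp (v - u) := by nlinarith
    _ = Real.exp v := by rw [← Real.exp_add]; ring_nf
  have h3 : Real.exp u ≤ Real.exp M := Real.exp_le_exp.2 hu
  rw [abs_of_nonneg (sub_nonneg.2 (Real.exp_le_exp.2 h)), abs_of_nonneg (sub_nonneg.2 h)]
  nlinarith [Real.exp_pos u]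

lemma cos_diff_le (a b : ℝ) : |Real.cos a - Real.cos b| ≤ |a - b| := by
  rw [Real.cos_sub_cos]
  have h1 := Real.abs_sin_le_one ((a + b) / 2)
  have h2 : |Real.sin ((a - b) / 2)| ≤ |(a - b) / 2| := Real.abs_sin_le_abs
  have e1 : |(-2) * Real.sin ((a + b) / 2) * Real.sin ((a - b) / 2)|
      = 2 * |Real.sin ((a + b) / 2)| * |Real.sin ((a - b) / 2)| := by
    rw [abs_mul, abs_mul]; norm_num
  have e2 : |(a - b) / 2| = |a - b| / 2 := by rw [abs_div, abs_two]
  rw [e1]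
  nlinarith [abs_nonneg (Real.sin ((a + b) / 2)), abs_nonneg (Real.sin ((a - b) / 2)),
    abs_nonneg (a - b)]

lemma sqrt_add_le' {x y : ℝ} (hx : 0 ≤ x) (hy : 0 ≤ y) :
    Real.sqrt (x + y) ≤ Real.sqrt x + Real.sqrt y := by
  have h : x + y ≤ (Real.sqrt x + Real.sqrt y) ^ 2 := by
    nlinarith [Real.sq_sqrt hx, Real.sq_sqrt hy,
      mul_nonneg (Real.sqrt_nonneg x) (Real.sqrt_nonneg y)]
  calc Real.sqrt (x + y) ≤ Real.sqrt ((Real.sqrt x + Real.sqrt y) ^ 2) := Real.sqrt_le_sqrt h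
    _ = Real.sqrt x + Real.sqrt y := Real.sqrt_sq (by positivity)

lemma sqrt_diff_le {a b : ℝ} (ha : 0 ≤ a) (hb : 0 ≤ b) :
    |Real.sqrt a - Real.sqrt b| ≤ Real.sqrt |a - b| := by
  wlog h : b ≤ a generalizing a b
  · rw [abs_sub_comm, abs_sub_comm a b]; exact this hb ha (le_of_not_ge h)
  rw [abs_of_nonneg (sub_nonneg.2 (Real.sqrt_le_sqrt h)), abs_of_nonneg (sub_nonneg.2 h)]
  have : Real.sqrt a ≤ Real.sqrt b + Real.sqrt (a - b) := by
    calc Real.sqrt a = Real.sqrt (b + (a - b)) := by ring_nf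
      _ ≤ Real.sqrt b + Real.sqrt (a - b) := sqrt_add_le' hb (by linarith)
  linarith

lemma sqrt_le_div_add {t c : ℝ} (ht : 0 ≤ t) (hc : 0 < c) :
    Real.sqrt t ≤ t / (2 * c) + c / 2 := by
  have h1 : Real.sqrt t ^ 2 = t := Real.sq_sqrt ht
  have h2 : 2 * c * Real.sqrt t ≤ t + c ^ 2 := by nlinarith [sq_nonneg (Real.sqrt t - c)]
  have h3 : (0:ℝ) < 2 * c := by positivity
  calc Real.sqrt t = (2 * c * Real.sqrt t) / (2 * c) := by field_simp
    _ ≤ (t + c ^ 2) / (2 * c) := by gcongr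
    _ = t / (2 * c) + c / 2 := by field_simp

/-- Vanderbei estimate `L(η) = 25/(2η) + π e` for the second test function
`f₂(x,y) = −10 exp(−√(|x+y|/2)) − exp(0.5(cos 2πx + cos 2πy))` on `[−2,12]²`,
in the ℓ¹ norm. -/
theorem stmt_9 (η : ℝ) (hη : 0 < η)
    (p q : ℝ × ℝ)
    (hp : p ∈ Set.Icc ((-2 : ℝ), (-2 : ℝ)) ((12 : ℝ), (12 : ℝ)))
    (hq : q ∈ Set.Icc ((-2 : ℝ), (-2 : ℝ)) ((12 : ℝ), (12 : ℝ))) :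
    |(-10 * Real.exp (-Real.sqrt (|p.1 + p.2| / 2))
        - Real.exp (0.5 * (Real.cos (2 * Real.pi * p.1) + Real.cos (2 * Real.pi * p.2))))
      - (-10 * Real.exp (-Real.sqrt (|q.1 + q.2| / 2))
        - Real.exp (0.5 * (Real.cos (2 * Real.pi * q.1) + Real.cos (2 * Real.pi * q.2))))|
      ≤ (25 / (2 * η) + Real.pi * Real.exp 1) * (|p.1 - q.1| + |p.2 - q.2|) + η := by
  set D : ℝ := |p.1 - q.1| + |p.2 - q.2| with hD
  have hD0 : 0 ≤ D := by positivity
  set A : ℝ := |p.1 + p.2| / 2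
  set B : ℝ := |q.1 + q.2| / 2
  have hA : 0 ≤ A := by positivity
  have hB : 0 ≤ B := by positivity
  -- first part
  have hAB : |A - B| ≤ D / 2 := by
    have h1 : |(|p.1 + p.2| - |q.1 + q.2|)| ≤ |(p.1 + p.2) - (q.1 + q.2)| :=
      abs_abs_sub_abs_le_abs_sub _ _
    have h2 : |(p.1 + p.2) - (q.1 + q.2)| ≤ D := by
      calc |(p.1 + p.2) - (q.1 + q.2)| = |(p.1 - q.1) + (p.2 - q.2)| := by ring_nf
        _ ≤ D := abs_add_le _ _
    have : |A - B| = |(|p.1 + p.2| - |q.1 + q.2|)| / 2 := by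
      rw [show A - B = (|p.1 + p.2| - |q.1 + q.2|) / 2 by ring, abs_div]; norm_num
    rw [this]; linarith
  have hsq : |Real.sqrt A - Real.sqrt B| ≤ 25 / (2 * η) / 10 * D + η / 10 := by
    calc |Real.sqrt A - Real.sqrt B| ≤ Real.sqrt |A - B| := sqrt_diff_le hA hB
      _ ≤ |A - B| / (2 * (η / 5)) + (η / 5) / 2 :=
          sqrt_le_div_add (abs_nonneg _) (by positivity)
      _ ≤ (D / 2) / (2 * (η / 5)) + (η / 5) / 2 := by gcongr
      _ = 25 / (2 * η) / 10 * D + η / 10 := by field_simp; ring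
  have hg : |(-10 * Real.exp (-Real.sqrt A)) - (-10 * Real.exp (-Real.sqrt B))|
      ≤ 25 / (2 * η) * D + η := by
    have h1 : |Real.exp (-Real.sqrt A) - Real.exp (-Real.sqrt B)|
        ≤ Real.exp 0 * |(-Real.sqrt A) - (-Real.sqrt B)| :=
      exp_diff_le' (by simpa using Real.sqrt_nonneg A) (by simpa using Real.sqrt_nonneg B)
    rw [Real.exp_zero, one_mul] at h1
    have h2 : |(-Real.sqrt A) - (-Real.sqrt B)| = |Real.sqrt A - Real.sqrt B| := by
      rw [show (-Real.sqrt A) - (-Real.sqrt B) = -(Real.sqrt A - Real.sqrt B) by ring, abs_neg]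
    rw [h2] at h1
    calc |(-10 * Real.exp (-Real.sqrt A)) - (-10 * Real.exp (-Real.sqrt B))|
        = 10 * |Real.exp (-Real.sqrt A) - Real.exp (-Real.sqrt B)| := by
          rw [show (-10 * Real.exp (-Real.sqrt A)) - (-10 * Real.exp (-Real.sqrt B))
            = -10 * (Real.exp (-Real.sqrt A) - Real.exp (-Real.sqrt B)) by ring, abs_mul]
          norm_num
      _ ≤ 10 * (25 / (2 * η) / 10 * D + η / 10) := by
          have := h1.trans hsq; linarith
      _ = 25 / (2 * η) * D + η := by ring
  -- second part
  set u : ℝ := 0.5 * (Real.cos (2 * Real.pi * p.1) + Real.cos (2 * Real.pi * p.2))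
  set v : ℝ := 0.5 * (Real.cos (2 * Real.pi * q.1) + Real.cos (2 * Real.pi * q.2))
  have hu1 : u ≤ 1 := by
    have := Real.cos_le_one (2 * Real.pi * p.1)
    have := Real.cos_le_one (2 * Real.pi * p.2)
    simp only [u]; nlinarith
  have hv1 : v ≤ 1 := by
    have := Real.cos_le_one (2 * Real.pi * q.1)
    have := Real.cos_le_one (2 * Real.pi * q.2)
    simp only [v]; nlinarith
  have huv : |u - v| ≤ Real.pi * D := by
    have h1 := cos_diff_le (2 * Real.pi * p.1) (2 * Real.pi * q.1)
    have h2 := cos_diff_le (2 * Real.pi * p.2) (2 * Real.pi * q.2)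
    have e1 : |2 * Real.pi * p.1 - 2 * Real.pi * q.1| = 2 * Real.pi * |p.1 - q.1| := by
      rw [show 2 * Real.pi * p.1 - 2 * Real.pi * q.1 = 2 * Real.pi * (p.1 - q.1) by ring,
        abs_mul, abs_of_nonneg (by positivity : (0:ℝ) ≤ 2 * Real.pi)]
    have e2 : |2 * Real.pi * p.2 - 2 * Real.pi * q.2| = 2 * Real.pi * |p.2 - q.2| := by
      rw [show 2 * Real.pi * p.2 - 2 * Real.pi * q.2 = 2 * Real.pi * (p.2 - q.2) by ring,
        abs_mul, abs_of_nonneg (by positivity : (0:ℝ) ≤ 2 * Real.pi)]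
    rw [e1] at h1; rw [e2] at h2
    calc |u - v| = |0.5 * ((Real.cos (2 * Real.pi * p.1) - Real.cos (2 * Real.pi * q.1))
          + (Real.cos (2 * Real.pi * p.2) - Real.cos (2 * Real.pi * q.2)))| := by
          simp only [u, v]; ring_nf
      _ ≤ 0.5 * (|Real.cos (2 * Real.pi * p.1) - Real.cos (2 * Real.pi * q.1)|
          + |Real.cos (2 * Real.pi * p.2) - Real.cos (2 * Real.pi * q.2)|) := by
          rw [abs_mul, abs_of_nonneg (by norm_num : (0.5:ℝ) ≥ 0)]
          gcongr; exact abs_add_le _ _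
      _ ≤ 0.5 * (2 * Real.pi * |p.1 - q.1| + 2 * Real.pi * |p.2 - q.2|) := by gcongr
      _ = Real.pi * D := by rw [hD]; ring
  have hh : |Real.exp u - Real.exp v| ≤ Real.exp 1 * (Real.pi * D) := by
    calc |Real.exp u - Real.exp v| ≤ Real.exp 1 * |u - v| := exp_diff_le' hu1 hv1
      _ ≤ Real.exp 1 * (Real.pi * D) := mul_le_mul_of_nonneg_left huv (Real.exp_pos 1).le
  -- combine
  calc |(-10 * Real.exp (-Real.sqrt A) - Real.exp u) - (-10 * Real.exp (-Real.sqrt B) - Real.exp v)|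
      = |((-10 * Real.exp (-Real.sqrt A)) - (-10 * Real.exp (-Real.sqrt B)))
        + (-(Real.exp u - Real.exp v))| := by ring_nf
    _ ≤ |(-10 * Real.exp (-Real.sqrt A)) - (-10 * Real.exp (-Real.sqrt B))|
        + |-(Real.exp u - Real.exp v)| := abs_add_le _ _
    _ = |(-10 * Real.exp (-Real.sqrt A)) - (-10 * Real.exp (-Real.sqrt B))|
        + |Real.exp u - Real.exp v| := by rw [abs_neg]
    _ ≤ (25 / (2 * η) * D + η) + Real.exp 1 * (Real.pi * D) := add_le_add hg hh
    _ = (25 / (2 * η) + Real.pi * Real.exp 1) * D + η := by ring
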